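/- Let K be a field, L a finite-dimensional separable field extension of K, ι a finite index type, b : ι → L a K-basis of L, and b' : ι → L a trace-dual family, i.e. Tr_{L/K}(b(i) · b'(j)) = 1 if i = j and 0 otherwise. Let m : (L ⊗_K L) × (L ⊗_K L) → L ⊗_K L be the K-bilinear multiplication determined on elementary tensors by m(x ⊗ y, x' ⊗ y') = Tr_{L/K}(y · x') • (x ⊗ y'). Then m is associative, and e := Σ_{i ∈ ι} b(i) ⊗ b'(i) is a two-sided unit for m: m(e, z) = z = m(z, e) for all z ∈ L ⊗_K L. (This is the separable Frobenius algebra structure on L ⊗_K L obtained from the biadjunction associated with the extension L/K; in particular the unit is independent of the auxiliary twisting.) -/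

import Mathlib

/-!
The separable Frobenius algebra structure on L ⊗_K L for a finite separable
extension L/K: the trace-twisted multiplication is associative with unit
Σᵢ bᵢ ⊗ b'ᵢ.
-/

open scoped BigOperators TensorProduct

section aux
variable (K L : Type*) [Field K] [Field L] [Algebra K L] [FiniteDimensional K L]
    [Algebra.IsSeparable K L] {ι : Type*} [Fintype ι] [DecidableEq ι]
    (b : Module.Basis ι K L) (b' : ι → L)
    (hb' : ∀ i j : ι, Algebra.trace K L (b i * b' j) = if i = j then 1 else 0)

omit [FiniteDimensional K L] [Algebra.IsSeparable K L] in
include hb' in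
lemma aux_dual_left (x : L) :
    ∑ i, Algebra.trace K L (b' i * x) • b i = x := by
  have key : ∀ i, Algebra.trace K L (b' i * x) = b.repr x i := by
    intro i
    conv_lhs => rw [← b.sum_repr x]
    rw [Finset.mul_sum, map_sum]
    simp only [mul_smul_comm, map_smul]
    simp [mul_comm (b' i), hb']
  simp_rw [key]
  exact b.sum_repr x

include hb' in
lemma aux_dual_right (y : L) :
    ∑ i, Algebra.trace K L (y * b i) • b' i = y := by
  have nd := traceForm_nondegenerate K L
  have hsub : y - ∑ i, Algebra.trace K L (y * b i) • b' i = 0 := by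
    apply nd.1
    intro z
    have hbasis : ∀ j, Algebra.traceForm K L
        (y - ∑ i, Algebra.trace K L (y * b i) • b' i) (b j) = 0 := by
      intro j
      simp only [Algebra.traceForm_apply, sub_mul, map_sub, Finset.sum_mul,
        map_sum, smul_mul_assoc, map_smul]
      have : ∀ i, Algebra.trace K L (b' i * b j) = if i = j then 1 else 0 := by
        intro i; rw [mul_comm]; rw [hb' j i]; simp [eq_comm]
      simp [this, smul_eq_mul, mul_comm]
    conv_lhs => rw [← b.sum_repr z]
    rw [map_sum]
    simp only [map_smul, hbasis, smul_zero, Finset.sum_const_zero]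
  exact (sub_eq_zero.mp hsub).symm
end aux

/-- Let `L/K` be a finite separable field extension,
`b : ι → L` a `K`-basis and `b' : ι → L` a trace-dual family.  Let `m` be the
`K`-bilinear multiplication on `L ⊗_K L` with
`m (x ⊗ y) (x' ⊗ y') = Tr_{L/K}(y x') • (x ⊗ y')`.  Then `m` is associative and
`e := ∑ i, b i ⊗ b' i` is a two-sided unit for `m`. -/
theorem tensor_trace_multiplication_assoc_unital
    (K L : Type*) [Field K] [Field L] [Algebra K L] [FiniteDimensional K L]
    [Algebra.IsSeparable K L] (ι : Type*) [Fintype ι] [DecidableEq ι]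
    (b : Module.Basis ι K L) (b' : ι → L)
    (hb' : ∀ i j : ι, Algebra.trace K L (b i * b' j) = if i = j then 1 else 0)
    (m : L ⊗[K] L →ₗ[K] L ⊗[K] L →ₗ[K] L ⊗[K] L)
    (hm : ∀ x y x' y' : L,
      m (x ⊗ₜ[K] y) (x' ⊗ₜ[K] y') = Algebra.trace K L (y * x') • (x ⊗ₜ[K] y')) :
    (∀ z₁ z₂ z₃ : L ⊗[K] L, m (m z₁ z₂) z₃ = m z₁ (m z₂ z₃)) ∧
    (∀ z : L ⊗[K] L, m (∑ i : ι, b i ⊗ₜ[K] b' i) z = z) ∧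
    (∀ z : L ⊗[K] L, m z (∑ i : ι, b i ⊗ₜ[K] b' i) = z) := by
  refine ⟨?_, ?_, ?_⟩
  · intro z₁ z₂ z₃
    induction z₁ using TensorProduct.induction_on with
    | zero => simp
    | add a c ha hc => simp [map_add, LinearMap.add_apply, ha, hc]
    | tmul x y =>
      induction z₂ using TensorProduct.induction_on with
      | zero => simp
      | add a c ha hc => simp [map_add, LinearMap.add_apply, ha, hc]
      | tmul x' y' =>
        induction z₃ using TensorProduct.induction_on with
        | zero => simp
        | add a c ha hc => simp [map_add, ha, hc]
        | tmul x'' y'' =>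
          simp only [map_smul, LinearMap.smul_apply, hm]
          rw [smul_comm]
  · intro z
    induction z using TensorProduct.induction_on with
    | zero => simp
    | add a c ha hc => rw [map_add, ha, hc]
    | tmul x y =>
      rw [map_sum, LinearMap.sum_apply]
      simp_rw [hm, TensorProduct.smul_tmul']
      rw [← TensorProduct.sum_tmul, aux_dual_left K L b b' hb']
  · intro z
    induction z using TensorProduct.induction_on with
    | zero => simp
    | add a c ha hc => rw [map_add, LinearMap.add_apply, ha, hc]
    | tmul x y =>
      rw [map_sum]
      simp_rw [hm, ← TensorProduct.tmul_smul]
      rw [← TensorProduct.tmul_sum, aux_dual_right K L b b' hb']
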